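/- Let M(k) be the k×k lower-triangular 0/1-matrix with entries m_{i,j} = binom(i+j, 2j) mod 2. If M(2^(n+1)) = [[A',0],[B',A']] in 2^n-blocks, then M(2^(n+2)) = [[A',0,0,0],[B',A',0,0],[A',B',A',0],[B',0,B',A']]. -/
import Mathlib


/-- Entry `(i,j)` of the infinite lower-triangular matrix `M`: `binom(i+j, 2j) mod 2`
(which vanishes automatically for `j > i`). -/
def emEntry (i j : ℕ) : ℤ := ((i + j).choose (2 * j) % 2 : ℕ)


lemma lucas2 (k : ℕ) : ∀ c d r s : ℕ, r < 2^k → s < 2^k →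
    (2^k * c + r).choose (2^k * d + s) ≡ c.choose d * r.choose s [MOD 2] := by
  haveI : Fact (Nat.Prime 2) := ⟨Nat.prime_two⟩
  induction k with
  | zero =>
    intro c d r s hr hs
    interval_cases r
    interval_cases s
    simp
    rfl
  | succ k ih =>
    intro c d r s hr hs
    have hp : (2:ℕ)^(k+1) = 2*2^k := by ring
    have hr2 : r / 2 < 2^k := by omega
    have hs2 : s / 2 < 2^k := by omega
    calc (2^(k+1) * c + r).choose (2^(k+1) * d + s)
        ≡ ((2^(k+1)*c+r) % 2).choose ((2^(k+1)*d+s) % 2) *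
            ((2^(k+1)*c+r) / 2).choose ((2^(k+1)*d+s) / 2) [MOD 2] :=
          Choose.choose_modEq_choose_mod_mul_choose_div_nat
      _ = (r % 2).choose (s % 2) * (2^k*c + r/2).choose (2^k*d + s/2) := by
          rw [hp, mul_assoc, mul_assoc, Nat.mul_add_mod, Nat.mul_add_mod,
            Nat.mul_add_div two_pos, Nat.mul_add_div two_pos]
      _ ≡ (r % 2).choose (s % 2) * (c.choose d * (r/2).choose (s/2)) [MOD 2] :=
          Nat.ModEq.mul_left _ (ih c d (r/2) (s/2) hr2 hs2)
      _ = c.choose d * ((r % 2).choose (s % 2) * (r/2).choose (s/2)) := by ring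
      _ ≡ c.choose d * r.choose s [MOD 2] :=
          Nat.ModEq.mul_left _ (Choose.choose_modEq_choose_mod_mul_choose_div_nat
            (n := r) (k := s) (p := 2)).symm

lemma emEq {i j i' j' : ℕ} (h : (i + j).choose (2 * j) ≡ (i' + j').choose (2 * j') [MOD 2]) :
    emEntry i j = emEntry i' j' := by
  simp only [emEntry]
  exact_mod_cast h

lemma emZero {i j : ℕ} (h : (i + j).choose (2 * j) ≡ 0 [MOD 2]) : emEntry i j = 0 := by
  simp only [emEntry]
  exact_mod_cast h

/-- `BA0BAB`-construction for `M`: writing `M(2^(n+1)) = [[A',0],[B',A']]` in `2^n`-blocks,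
that is, `A' a b = emEntry a b` and `B' a b = emEntry (2^n + a) b` for `a, b < 2^n`, the matrix
`M(2^(n+2))` has the block form `[[A',0,0,0],[B',A',0,0],[A',B',A',0],[B',0,B',A']]`. -/
theorem em_block_structure (n a b : ℕ) (ha : a < 2 ^ n) (hb : b < 2 ^ n) :
    -- block (1,1) = A'  (so that indeed M(2^(n+1)) = [[A',0],[B',A']])
    emEntry (2 ^ n + a) (2 ^ n + b) = emEntry a b ∧
    -- row 2 of M(2^(n+2)): [A', B', A', 0]
    emEntry (2 * 2 ^ n + a) b = emEntry a b ∧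
    emEntry (2 * 2 ^ n + a) (2 ^ n + b) = emEntry (2 ^ n + a) b ∧
    emEntry (2 * 2 ^ n + a) (2 * 2 ^ n + b) = emEntry a b ∧
    -- row 3 of M(2^(n+2)): [B', 0, B', A']
    emEntry (3 * 2 ^ n + a) b = emEntry (2 ^ n + a) b ∧
    emEntry (3 * 2 ^ n + a) (2 ^ n + b) = 0 ∧
    emEntry (3 * 2 ^ n + a) (2 * 2 ^ n + b) = emEntry (2 ^ n + a) b ∧
    emEntry (3 * 2 ^ n + a) (3 * 2 ^ n + b) = emEntry a b := by
  set N := 2 ^ n with hN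
  have p1 : 2 ^ (n+1) = 2 * N := by rw [hN]; ring
  have p2 : 2 ^ (n+2) = 4 * N := by rw [hN]; ring
  have hab : a + b < 2 ^ (n+1) := by omega
  have h2b : 2 * b < 2 ^ (n+1) := by omega
  have hab2 : a + b < 2 ^ (n+2) := by omega
  have h2b2 : 2 * b < 2 ^ (n+2) := by omega
  have hNab : N + (a + b) < 2 ^ (n+2) := by omega
  refine ⟨?_, ?_, ?_, ?_, ?_, ?_, ?_, ?_⟩
  · -- (N+a, N+b) ↦ (a,b) : base 2N, digits (1,1)
    apply emEq
    have e1 : N + a + (N + b) = 2^(n+1) * 1 + (a + b) := by omega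
    have e2 : 2 * (N + b) = 2^(n+1) * 1 + 2 * b := by omega
    rw [e1, e2]
    simpa using lucas2 (n+1) 1 1 (a+b) (2*b) hab h2b
  · -- (2N+a, b) ↦ (a,b) : base 2N, digits (1,0)
    apply emEq
    have e1 : 2 * N + a + b = 2^(n+1) * 1 + (a + b) := by omega
    have e2 : 2 * b = 2^(n+1) * 0 + 2 * b := by omega
    rw [e1, e2]
    simpa using lucas2 (n+1) 1 0 (a+b) (2*b) hab h2b
  · -- (2N+a, N+b) ↦ (N+a, b) : base 2N, digits: 3N+a+b vs 2N+2b; case split on a+b < N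
    apply emEq
    rcases lt_or_ge (a + b) N with h | h
    · have e1 : 2 * N + a + (N + b) = 2^(n+1) * 1 + (N + (a + b)) := by omega
      have e2 : 2 * (N + b) = 2^(n+1) * 1 + 2 * b := by omega
      have e3 : N + a + b = N + (a + b) := by omega
      have hNab' : N + (a + b) < 2 ^ (n+1) := by omega
      rw [e1, e2, e3]
      simpa using lucas2 (n+1) 1 1 (N+(a+b)) (2*b) hNab' h2b
    · -- both sides ≡ 0
      have e1 : 2 * N + a + (N + b) = 2^(n+1) * 2 + (a + b - N) := by omega
      have e2 : 2 * (N + b) = 2^(n+1) * 1 + 2 * b := by omega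
      have e3 : N + a + b = 2^(n+1) * 1 + (a + b - N) := by omega
      have e4 : 2 * b = 2^(n+1) * 0 + 2 * b := by omega
      have hr : a + b - N < 2^(n+1) := by omega
      have l1 := lucas2 (n+1) 2 1 (a+b-N) (2*b) hr h2b
      have l2 := lucas2 (n+1) 1 0 (a+b-N) (2*b) hr h2b
      have hz : (a + b - N).choose (2 * b) = 0 :=
        Nat.choose_eq_zero_of_lt (by omega)
      rw [e1, e2]
      conv_rhs => rw [e3, e4]
      calc (2^(n+1) * 2 + (a+b-N)).choose (2^(n+1) * 1 + 2*b)
          ≡ Nat.choose 2 1 * (a+b-N).choose (2*b) [MOD 2] := l1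
        _ = Nat.choose 1 0 * (a+b-N).choose (2*b) := by simp [hz]
        _ ≡ (2^(n+1) * 1 + (a+b-N)).choose (2^(n+1) * 0 + 2*b) [MOD 2] := l2.symm
  · -- (2N+a, 2N+b) ↦ (a,b) : base 4N, digits (1,1)
    apply emEq
    have e1 : 2 * N + a + (2 * N + b) = 2^(n+2) * 1 + (a + b) := by omega
    have e2 : 2 * (2 * N + b) = 2^(n+2) * 1 + 2 * b := by omega
    rw [e1, e2]
    simpa using lucas2 (n+2) 1 1 (a+b) (2*b) hab2 h2b2
  · -- (3N+a, b) ↦ (N+a, b) : case split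
    apply emEq
    rcases lt_or_ge (a + b) N with h | h
    · have e1 : 3 * N + a + b = 2^(n+1) * 1 + (N + (a + b)) := by omega
      have e2 : 2 * b = 2^(n+1) * 0 + 2 * b := by omega
      have e3 : N + a + b = N + (a + b) := by omega
      have hNab' : N + (a + b) < 2 ^ (n+1) := by omega
      rw [e1, e3]
      conv_rhs => rw [e2]
      simpa using lucas2 (n+1) 1 0 (N+(a+b)) (2*b) hNab' h2b
    · have e1 : 3 * N + a + b = 2^(n+1) * 2 + (a + b - N) := by omega
      have e2 : 2 * b = 2^(n+1) * 0 + 2 * b := by omega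
      have e3 : N + a + b = 2^(n+1) * 1 + (a + b - N) := by omega
      have hr : a + b - N < 2^(n+1) := by omega
      have l1 := lucas2 (n+1) 2 0 (a+b-N) (2*b) hr h2b
      have l2 := lucas2 (n+1) 1 0 (a+b-N) (2*b) hr h2b
      have l1' : (2^(n+1) * 2 + (a+b-N)).choose (2*b) ≡ (a+b-N).choose (2*b) [MOD 2] := by
        simpa using l1
      have l2' : (2^(n+1) * 1 + (a+b-N)).choose (2*b) ≡ (a+b-N).choose (2*b) [MOD 2] := by
        simpa using l2
      rw [e1]
      conv_rhs => rw [e3]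
      exact l1'.trans l2'.symm
  · -- (3N+a, N+b) = 0 : base 2N, digits (2,1), choose 2 1 = 2 even
    apply emZero
    have e1 : 3 * N + a + (N + b) = 2^(n+1) * 2 + (a + b) := by omega
    have e2 : 2 * (N + b) = 2^(n+1) * 1 + 2 * b := by omega
    rw [e1, e2]
    calc (2^(n+1) * 2 + (a+b)).choose (2^(n+1) * 1 + 2*b)
        ≡ Nat.choose 2 1 * (a+b).choose (2*b) [MOD 2] := lucas2 (n+1) 2 1 (a+b) (2*b) hab h2b
      _ ≡ 0 [MOD 2] := (Nat.modEq_zero_iff_dvd).mpr ⟨(a+b).choose (2*b), by norm_num⟩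
  · -- (3N+a, 2N+b) ↦ (N+a, b) : base 4N, digits (1,1), remainder N+a+b
    apply emEq
    have e1 : 3 * N + a + (2 * N + b) = 2^(n+2) * 1 + (N + (a + b)) := by omega
    have e2 : 2 * (2 * N + b) = 2^(n+2) * 1 + 2 * b := by omega
    have e3 : N + a + b = N + (a + b) := by omega
    rw [e1, e2, e3]
    simpa using lucas2 (n+2) 1 1 (N+(a+b)) (2*b) hNab h2b2
  · -- (3N+a, 3N+b) ↦ (a,b) : base 2N, digits (3,3)
    apply emEq
    have e1 : 3 * N + a + (3 * N + b) = 2^(n+1) * 3 + (a + b) := by omega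
    have e2 : 2 * (3 * N + b) = 2^(n+1) * 3 + 2 * b := by omega
    rw [e1, e2]
    simpa using lucas2 (n+1) 3 3 (a+b) (2*b) hab h2b
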